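/- Suppose the highest ℓ-weight ψ has all zeroes and poles in q^ℤ, i.e. ψ_i(z) = c_i·∏_{s∈ℤ}(1 − q^s/z)^{l_{i,s}} / ∏_{s∈ℤ}(1 − q^s/z)^{m_{i,s}} with c_i ∈ 𝕂* and l_{i,s}, m_{i,s} ∈ ℕ almost all zero, let 1/ψ^den denote the highest ℓ-weight (∏_{s∈ℤ}(1 − q^s/z)^{−m_{i,s}})_{i∈I}, set Δ_𝐥 := ∏_{i∈I}∏_{a=1}^{n_i}∏_{s∈ℤ}(1 − q^s/z_{ia})^{l_{i,s}} ∈ 𝒱_𝐧, and suppose every entry x_{ia} of 𝐱 is an integer power of q. Then multiplication by Δ_𝐥 induces a 𝕂-linear isomorphism S_𝐧/(S_𝐧 ∩ Θ(ψ)_𝐱) ≅ (Δ_𝐥·S_𝐧) / ((Δ_𝐥·S_𝐧) ∩ Θ(1/ψ^den)_𝐱). -/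

import Mathlib

open scoped BigOperators

/-! ### Iterated Laurent series -/

noncomputable def ILaux (K : Type) [Field K] : ℕ → Σ' (T : Type), Field T
  | 0 => ⟨K, inferInstance⟩
  | n+1 => ⟨@LaurentSeries (ILaux K n).1 (letI := (ILaux K n).2; inferInstance),
            letI := (ILaux K n).2; inferInstance⟩

noncomputable instance ILaux.instField (K : Type) [Field K] (n : ℕ) : Field (ILaux K n).1 :=
  (ILaux K n).2

/-- `IterLaurent K n` is the `n`-fold iterated Laurent series field
`K((t_n))((t_{n-1}))⋯((t_1))`, with `t_1` the innermost variable in the notation. -/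
noncomputable def IterLaurent (K : Type) [Field K] (n : ℕ) : Type := (ILaux K n).1

noncomputable instance IterLaurent.instField (K : Type) [Field K] (n : ℕ) :
    Field (IterLaurent K n) := (ILaux K n).2

/-- The variable `t_a` of the iterated Laurent series field. -/
noncomputable def tvar (K : Type) [Field K] : (n : ℕ) → Fin n → IterLaurent K n
  | n+1, ⟨0, _⟩ => (HahnSeries.single (1:ℤ) (1 : IterLaurent K n) : LaurentSeries (IterLaurent K n))
  | n+1, ⟨a+1, _h⟩ => (HahnSeries.C (tvar K n ⟨a, by omega⟩) : LaurentSeries (IterLaurent K n))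

/-- Iterated extraction of the coefficient of `t_1⁻¹ t_2⁻¹ ⋯ t_n⁻¹`. -/
noncomputable def ires (K : Type) [Field K] : (n : ℕ) → IterLaurent K n → K
  | 0, x => x
  | n+1, x => ires K n ((x : LaurentSeries (IterLaurent K n)).coeff (-1))

/-- Constants embed into the iterated Laurent series field. -/
noncomputable def constIL (K : Type) [Field K] : (n : ℕ) → (K →+* IterLaurent K n)
  | 0 => RingHom.id K
  | n+1 => ((HahnSeries.C : IterLaurent K n →+* LaurentSeries (IterLaurent K n)).comp (constIL K n))

/-! ### Laurent polynomials -/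

/-- The ring of Laurent polynomials over `K` in variables indexed by `ι`. -/
noncomputable abbrev LaurentPoly (K : Type) [CommRing K] (ι : Type) : Type :=
  AddMonoidAlgebra K (ι →₀ ℤ)

/-- Evaluation of a Laurent polynomial at (invertible) values `v` in a field `L`,
transporting coefficients along `φ`. -/
noncomputable def lpEval {K L ι : Type} [CommRing K] [Field L] (φ : K →+* L) (v : ι → L)
    (F : LaurentPoly K ι) : L :=
  F.coeff.sum fun d c => φ c * d.prod fun a k => v a ^ k

/-- Renaming of variables of a Laurent polynomial along a bijection. -/
noncomputable def lpRename {K : Type} [CommRing K] {ι κ : Type} (e : ι ≃ κ) :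
    LaurentPoly K ι ≃ₐ[K] LaurentPoly K κ :=
  AddMonoidAlgebra.domCongr K K (Finsupp.domCongr e)

/-- The variable `z_c` as a Laurent polynomial. -/
noncomputable def lpVar {K : Type} [CommRing K] {ι : Type} (c : ι) : LaurentPoly K ι :=
  AddMonoidAlgebra.single (Finsupp.single c 1) 1

noncomputable instance {K ι : Type} [Field K] : IsDomain (LaurentPoly K ι) :=
  NoZeroDivisors.to_isDomain _

/-! ### The ground field `𝕂 = ℚ(q)` -/

/-- The ground field `𝕂 = ℚ(q)`. -/
noncomputable abbrev QQq : Type := RatFunc ℚ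

/-- The variable `q ∈ 𝕂`. -/
noncomputable def qq : QQq := RatFunc.X

section SetupB

variable {I : Type} [Fintype I] [LinearOrder I] [DecidableEq I]

/-- The function `ζ_{ij}`, evaluated in a field `L` (at an invertible element `w`),
where `qL` is the image of `q` in `L` and `d` is the symmetrized Cartan matrix. -/
noncomputable def zetaVal (d : I → I → ℤ) {L : Type} [Field L] (qL : L) (i j : I) (w : L) : L :=
  if i < j then qL ^ (-(d i j)) - w
  else if i = j then (qL ^ (-(d i j)) - w) / (1 - w)
  else 1 - qL ^ (-(d i j)) * w⁻¹

variable (n : I → ℕ)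

/-- The space `𝒱_𝐧` of color-symmetric Laurent polynomials over a field `K`. -/
noncomputable def VSymF (K : Type) [Field K] :
    Submodule K (LaurentPoly K (Σ i : I, Fin (n i))) where
  carrier := {F | ∀ σ : Equiv.Perm (Σ i : I, Fin (n i)),
    (∀ c, (σ c).1 = c.1) → lpRename (K := K) σ F = F}
  add_mem' := by intro F G hF hG σ hσ; simp [map_add, hF σ hσ, hG σ hσ]
  zero_mem' := by intro σ hσ; simp
  smul_mem' := by intro c F hF σ hσ; simp [map_smul, hF σ hσ]

/-- The space `V_𝐱` of Laurent polynomials over a field `K`, symmetric under exchanging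
`z_{ia}` and `z_{ib}` whenever `x_{ia} = x_{ib}`. -/
noncomputable def VxSymF (K : Type) [Field K] (x : (Σ i : I, Fin (n i)) → QQqˣ) :
    Submodule K (LaurentPoly K (Σ i : I, Fin (n i))) where
  carrier := {F | ∀ σ : Equiv.Perm (Σ i : I, Fin (n i)),
    (∀ c, (σ c).1 = c.1 ∧ x (σ c) = x c) → lpRename (K := K) σ F = F}
  add_mem' := by intro F G hF hG σ hσ; simp [map_add, hF σ hσ, hG σ hσ]
  zero_mem' := by intro σ hσ; simp
  smul_mem' := by intro c F hF σ hσ; simp [map_smul, hF σ hσ]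

variable {n}

/-- The residue conditions defining `Θ(ψ)_𝐱 ⊆ 𝒱_𝐧`, where `psiv i w` is the evaluation of
`ψ_i(z)/z` at `z = w` (so that `psiv` encodes the highest ℓ-weight `ψ`). -/
noncomputable def ThetaPsiCond (d : I → I → ℤ) (x : (Σ i : I, Fin (n i)) → QQqˣ)
    (psiv : I → IterLaurent QQq (∑ i, n i) → IterLaurent QQq (∑ i, n i))
    (F : LaurentPoly QQq (Σ i : I, Fin (n i))) : Prop :=
  ∀ (e : Fin (∑ i, n i) ≃ (Σ i : I, Fin (n i))) (dd : Fin (∑ i, n i) → ℤ),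
    ires QQq (∑ i, n i) (
      (∏ a, (constIL QQq (∑ i, n i) ((x (e a) : QQq)) * (1 + tvar QQq (∑ i, n i) a)) ^ dd a) *
      lpEval (constIL QQq (∑ i, n i))
        (fun c => constIL QQq (∑ i, n i) ((x c : QQq)) * (1 + tvar QQq (∑ i, n i) (e.symm c))) F *
      (∏ a, psiv (e a).1
        (constIL QQq (∑ i, n i) ((x (e a) : QQq)) * (1 + tvar QQq (∑ i, n i) a))) *
      ∏ p ∈ Finset.filter (fun p : Fin (∑ i, n i) × Fin (∑ i, n i) => p.1 < p.2) Finset.univ,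
        (zetaVal d (constIL QQq (∑ i, n i) qq) (e p.2).1 (e p.1).1
          ((constIL QQq (∑ i, n i) ((x (e p.2) : QQq)) * (1 + tvar QQq (∑ i, n i) p.2)) /
           (constIL QQq (∑ i, n i) ((x (e p.1) : QQq)) * (1 + tvar QQq (∑ i, n i) p.1))))⁻¹) = 0

/-- The value of `ψ_i(z)/z` at `z = w`, for a highest ℓ-weight with data `c`, `l`, `m`
(zeroes of order `l_{i,γ}` and poles of order `m_{i,γ}` at `γ ∈ 𝕂*`). -/
noncomputable def psiOverZVal {L : Type} [Field L] (φ : QQq →+* L)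
    (c : I → QQqˣ) (l m : I → QQqˣ →₀ ℕ) (i : I) (w : L) : L :=
  φ (c i) * ((l i).prod fun γ k => (1 - φ (γ : QQq) / w) ^ (k : ℤ)) *
    ((m i).prod fun γ k => (1 - φ (γ : QQq) / w) ^ (-(k : ℤ))) / w

open Classical in
/-- The set `Θ_𝐱^{𝐦'} ⊆ V_𝐱` (over `ℚ`). -/
noncomputable def ThetaX (d : I → I → ℤ) (x : (Σ i : I, Fin (n i)) → QQqˣ)
    (m' : (Σ i : I, Fin (n i)) → ℤ) : Set (LaurentPoly ℚ (Σ i : I, Fin (n i))) :=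
  {F | F ∈ VxSymF n ℚ x ∧
    ∀ (e : Fin (∑ i, n i) ≃ (Σ i : I, Fin (n i))) (dd : Fin (∑ i, n i) → ℤ),
      ires ℚ (∑ i, n i) (
        (∏ a, (1 + tvar ℚ (∑ i, n i) a) ^ dd a) *
        lpEval (constIL ℚ (∑ i, n i)) (fun c => 1 + tvar ℚ (∑ i, n i) (e.symm c)) F *
        (∏ p ∈ Finset.filter (fun p : Fin (∑ i, n i) × Fin (∑ i, n i) => p.1 < p.2) Finset.univ,
          (tvar ℚ (∑ i, n i) p.2 - tvar ℚ (∑ i, n i) p.1) ^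
            (((if (e p.1).1 = (e p.2).1 ∧ x (e p.1) = x (e p.2) then 1 else 0) : ℤ) -
             ((if (x (e p.1) : QQq) = (x (e p.2) : QQq) * qq ^ d (e p.1).1 (e p.2).1
                then 1 else 0) : ℤ))) *
        ∏ a, tvar ℚ (∑ i, n i) a ^ (-(m' (e a)))) = 0}

/-- Extension of coefficients from `ℚ` to `𝕂` of a Laurent polynomial. -/
noncomputable def extQK {ι : Type} (F : LaurentPoly ℚ ι) : LaurentPoly QQq ι :=
  AddMonoidAlgebra.ofCoeff (Finsupp.mapRange (algebraMap ℚ QQq) (map_zero _) F.coeff)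

/-- Rescaling of variables `z_{ia} ↦ x_{ia}·z_{ia}` of a Laurent polynomial over `𝕂`. -/
noncomputable def rescale {ι : Type} (x : ι → QQqˣ) (F : LaurentPoly QQq ι) :
    LaurentPoly QQq ι :=
  AddMonoidAlgebra.ofCoeff
    (F.coeff.sum fun dd c => Finsupp.single dd (c * dd.prod fun a k => (x a : QQq) ^ k))

end SetupB

/-! ### ℓ-weights with zeroes and poles in `q^ℤ` -/

/-- `q` as a unit of `𝕂`. -/
noncomputable def qUnit : QQqˣ := Units.mk0 qq (by simpa [qq] using RatFunc.X_ne_zero)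

/-- Conversion of exponent data indexed by `s ∈ ℤ` to exponent data indexed by `γ = q^s ∈ 𝕂*`. -/
noncomputable def gammaOfZ (lz : ℤ →₀ ℕ) : QQqˣ →₀ ℕ :=
  Finsupp.mapDomain (fun s : ℤ => qUnit ^ s) lz

/-- The element `Δ_𝐥 = ∏_{i∈I}∏_{a=1}^{n_i}∏_{s∈ℤ} (1 − q^s/z_{ia})^{l_{i,s}} ∈ 𝒱_𝐧`. -/
noncomputable def deltaL {I : Type} [Fintype I] [DecidableEq I] {n : I → ℕ} (l : I → ℤ →₀ ℕ) :
    LaurentPoly QQq (Σ i : I, Fin (n i)) :=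
  ∏ cc : (Σ i : I, Fin (n i)), (l cc.1).prod fun s k =>
    ((1 : LaurentPoly QQq (Σ i : I, Fin (n i))) -
      AddMonoidAlgebra.single (Finsupp.single cc (-1 : ℤ)) (qq ^ s)) ^ k

/-- The shuffle algebra graded piece `S_𝐧 ⊆ 𝒱_𝐧`: the `𝕂`-span of the symmetrizations
`Sym[ z_1^{d_1}⋯z_n^{d_n} ∏_{a<b} ζ_{i_b i_a}(z_b/z_a) ]`. -/
noncomputable def shuffleSpan {I : Type} [Fintype I] [LinearOrder I]
    (d : I → I → ℤ) (n : I → ℕ) :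
    Submodule QQq (LaurentPoly QQq (Σ i : I, Fin (n i))) :=
  Submodule.span QQq
    {F : LaurentPoly QQq (Σ i : I, Fin (n i)) |
      ∃ (e : Fin (∑ i, n i) ≃ (Σ i : I, Fin (n i))) (dd : Fin (∑ i, n i) → ℤ),
        algebraMap (LaurentPoly QQq (Σ i : I, Fin (n i)))
            (FractionRing (LaurentPoly QQq (Σ i : I, Fin (n i)))) F =
          ∑ σ ∈ Finset.filter (fun σ : Equiv.Perm (Σ i : I, Fin (n i)) =>
              ∀ cc, (σ cc).1 = cc.1) Finset.univ,
            (∏ a, (algebraMap (LaurentPoly QQq (Σ i : I, Fin (n i)))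
                (FractionRing (LaurentPoly QQq (Σ i : I, Fin (n i))))
                (lpVar (σ (e a)))) ^ dd a) *
            ∏ p ∈ Finset.filter
                (fun p : Fin (∑ i, n i) × Fin (∑ i, n i) => p.1 < p.2) Finset.univ,
              zetaVal d
                (algebraMap (LaurentPoly QQq (Σ i : I, Fin (n i)))
                  (FractionRing (LaurentPoly QQq (Σ i : I, Fin (n i))))
                  (algebraMap QQq (LaurentPoly QQq (Σ i : I, Fin (n i))) qq))
                (e p.2).1 (e p.1).1
                (algebraMap (LaurentPoly QQq (Σ i : I, Fin (n i)))
                    (FractionRing (LaurentPoly QQq (Σ i : I, Fin (n i))))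
                    (lpVar (σ (e p.2))) /
                  algebraMap (LaurentPoly QQq (Σ i : I, Fin (n i)))
                    (FractionRing (LaurentPoly QQq (Σ i : I, Fin (n i))))
                    (lpVar (σ (e p.1))))}
section Helpers
variable {K : Type} [Field K]

lemma ires_zero : ∀ n : ℕ, ires K n 0 = 0
  | 0 => rfl
  | n+1 => by
    show ires K n ((0 : LaurentSeries (IterLaurent K n)).coeff (-1)) = 0
    rw [HahnSeries.coeff_zero]; exact ires_zero n

lemma ires_add : ∀ (n : ℕ) (a b : IterLaurent K n), ires K n (a + b) = ires K n a + ires K n b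
  | 0, _, _ => rfl
  | n+1, a, b => by
    show ires K n (((a + b : LaurentSeries (IterLaurent K n))).coeff (-1)) = _
    erw [HahnSeries.coeff_add]
    exact ires_add n _ _

lemma ires_constIL_mul : ∀ (n : ℕ) (k : K) (a : IterLaurent K n),
    ires K n (constIL K n k * a) = k * ires K n a
  | 0, _, _ => rfl
  | n+1, k, a => by
    show ires K n (((constIL K (n+1) k * a : LaurentSeries (IterLaurent K n))).coeff (-1)) = _
    have h : constIL K (n+1) k = HahnSeries.C (constIL K n k) := rfl
    rw [h]
    rw [show (HahnSeries.C (constIL K n k) : LaurentSeries (IterLaurent K n)) =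
      HahnSeries.single 0 (constIL K n k) from rfl]
    erw [HahnSeries.coeff_single_zero_mul]
    exact ires_constIL_mul n k _

lemma one_add_tvar_ne_zero : ∀ (n : ℕ) (a : Fin n), (1 + tvar K n a) ≠ 0
  | n+1, ⟨0, h⟩ => by
    show (1 + (HahnSeries.single (1:ℤ) (1 : IterLaurent K n) : LaurentSeries (IterLaurent K n))) ≠ 0
    intro hc
    have := congrArg (fun y : LaurentSeries (IterLaurent K n) => y.coeff 0) hc
    simp [HahnSeries.coeff_add, HahnSeries.coeff_single] at this
  | n+1, ⟨a+1, h⟩ => by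
    show (1 + (HahnSeries.C (tvar K n ⟨a, by omega⟩) : LaurentSeries (IterLaurent K n))) ≠ 0
    intro hc
    have h1 : ((HahnSeries.C (1 + tvar K n ⟨a, by omega⟩) : LaurentSeries (IterLaurent K n))) = 0 := by
      rw [map_add, map_one]; exact hc
    have h2 := (map_eq_zero_iff (HahnSeries.C : IterLaurent K n →+* LaurentSeries (IterLaurent K n))
      (HahnSeries.C_injective)).mp h1
    exact one_add_tvar_ne_zero n ⟨a, by omega⟩ h2

lemma constIL_injective (n : ℕ) : Function.Injective (constIL K n) :=
  (constIL K n).injective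

end Helpers
section EvalHelpers
variable {K L ι : Type} [CommRing K] [Field L]

/-- The monomial evaluation monoid hom. -/
noncomputable def lpMonHom (v : ι → L) (hv : ∀ a, v a ≠ 0) : Multiplicative (ι →₀ ℤ) →* L where
  toFun d := (Multiplicative.toAdd d).prod fun a k => v a ^ k
  map_one' := by simp
  map_mul' d1 d2 := Finsupp.prod_add_index' (fun a => zpow_zero _)
    (fun a k1 k2 => zpow_add₀ (hv a) _ _)

lemma lpEval_eq_liftNC (φ : K →+* L) (v : ι → L) (hv : ∀ a, v a ≠ 0) (F : LaurentPoly K ι) :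
    lpEval φ v F =
      AddMonoidAlgebra.liftNCRingHom φ (lpMonHom v hv) (fun _ _ => Commute.all _ _) F := rfl

lemma lpEval_mul (φ : K →+* L) (v : ι → L) (hv : ∀ a, v a ≠ 0) (F G : LaurentPoly K ι) :
    lpEval φ v (F * G) = lpEval φ v F * lpEval φ v G := by
  simp only [lpEval_eq_liftNC φ v hv, map_mul]

lemma lpEval_add (φ : K →+* L) (v : ι → L) (hv : ∀ a, v a ≠ 0) (F G : LaurentPoly K ι) :
    lpEval φ v (F + G) = lpEval φ v F + lpEval φ v G := by
  simp only [lpEval_eq_liftNC φ v hv, map_add]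

lemma lpEval_zero (φ : K →+* L) (v : ι → L) : lpEval φ v 0 = 0 := by
  simp [lpEval]

lemma lpEval_one (φ : K →+* L) (v : ι → L) (hv : ∀ a, v a ≠ 0) : lpEval φ v 1 = 1 := by
  simp only [lpEval_eq_liftNC φ v hv, map_one]

lemma lpEval_smul (φ : K →+* L) (v : ι → L) (hv : ∀ a, v a ≠ 0) (k : K) (F : LaurentPoly K ι) :
    lpEval φ v (k • F) = φ k * lpEval φ v F := by
  simp only [lpEval_eq_liftNC φ v hv]
  exact AddMonoidAlgebra.liftNC_smul φ (lpMonHom v hv) k F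

lemma lpEval_single (φ : K →+* L) (v : ι → L) (dd : ι →₀ ℤ) (a : K) :
    lpEval φ v (AddMonoidAlgebra.single dd a) = φ a * dd.prod fun c k => v c ^ k := by
  unfold lpEval
  rw [AddMonoidAlgebra.coeff_single, Finsupp.sum_single_index]
  simp

end EvalHelpers
section DeltaHelpers
variable {I : Type} [Fintype I] [DecidableEq I] {n : I → ℕ}

lemma lpRename_single {K : Type} [CommRing K] {ι κ : Type} (e : ι ≃ κ) (dd : ι →₀ ℤ) (a : K) :
    lpRename (K := K) e (AddMonoidAlgebra.single dd a) =
      AddMonoidAlgebra.single (Finsupp.equivMapDomain e dd) a := by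
  simp [lpRename, AddMonoidAlgebra.domCongr_single, Finsupp.domCongr_apply]

lemma deltaL_factor_ne_zero (cc : Σ i : I, Fin (n i)) (s : ℤ) :
    ((1 : LaurentPoly QQq (Σ i : I, Fin (n i))) -
      AddMonoidAlgebra.single (Finsupp.single cc (-1 : ℤ)) (qq ^ s)) ≠ 0 := by
  intro h
  have hne : (Finsupp.single cc (-1 : ℤ)) ≠ (0 : (Σ i : I, Fin (n i)) →₀ ℤ) := by
    simp [Finsupp.single_eq_zero]
  have h1 : (AddMonoidAlgebra.single 0 1 : LaurentPoly QQq (Σ i : I, Fin (n i))) =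
      AddMonoidAlgebra.single (Finsupp.single cc (-1 : ℤ)) (qq ^ s) := by
    rw [← AddMonoidAlgebra.one_def]; exact sub_eq_zero.mp h
  rcases AddMonoidAlgebra.single_inj.mp h1 with ⟨h2, _⟩ | ⟨h2, _⟩
  · exact hne h2.symm
  · exact one_ne_zero h2

lemma deltaL_ne_zero (l : I → ℤ →₀ ℕ) : (deltaL (n := n) l) ≠ 0 := by
  unfold deltaL
  rw [Finset.prod_ne_zero_iff]
  intro cc _
  unfold Finsupp.prod
  rw [Finset.prod_ne_zero_iff]
  intro s _
  exact pow_ne_zero _ (deltaL_factor_ne_zero cc s)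

lemma lpRename_deltaL (l : I → ℤ →₀ ℕ) (σ : Equiv.Perm (Σ i : I, Fin (n i)))
    (hσ : ∀ cc : Σ i : I, Fin (n i), (σ cc).1 = cc.1) :
    lpRename (K := QQq) σ (deltaL (n := n) l) = deltaL (n := n) l := by
  unfold deltaL
  rw [map_prod]
  have hfac : ∀ cc : Σ i : I, Fin (n i),
      lpRename (K := QQq) σ ((l cc.1).prod fun s k =>
        ((1 : LaurentPoly QQq (Σ i : I, Fin (n i))) -
          AddMonoidAlgebra.single (Finsupp.single cc (-1 : ℤ)) (qq ^ s)) ^ k) =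
      (l (σ cc).1).prod fun s k =>
        ((1 : LaurentPoly QQq (Σ i : I, Fin (n i))) -
          AddMonoidAlgebra.single (Finsupp.single (σ cc) (-1 : ℤ)) (qq ^ s)) ^ k := by
    intro cc
    rw [map_finsuppProd]
    rw [hσ cc]
    refine Finsupp.prod_congr fun s _ => ?_
    rw [map_pow, map_sub, map_one, lpRename_single]
    congr 2
    rw [Finsupp.equivMapDomain_single]
  calc ∏ cc, lpRename (K := QQq) σ ((l cc.1).prod fun s k =>
        ((1 : LaurentPoly QQq (Σ i : I, Fin (n i))) -
          AddMonoidAlgebra.single (Finsupp.single cc (-1 : ℤ)) (qq ^ s)) ^ k)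
      = ∏ cc, (l (σ cc).1).prod fun s k =>
        ((1 : LaurentPoly QQq (Σ i : I, Fin (n i))) -
          AddMonoidAlgebra.single (Finsupp.single (σ cc) (-1 : ℤ)) (qq ^ s)) ^ k := by
        exact Finset.prod_congr rfl fun cc _ => hfac cc
    _ = _ := Equiv.prod_comp σ (fun cc' : Σ i : I, Fin (n i) =>
        (l cc'.1).prod fun s k =>
          ((1 : LaurentPoly QQq (Σ i : I, Fin (n i))) -
            AddMonoidAlgebra.single (Finsupp.single cc' (-1 : ℤ)) (qq ^ s)) ^ k)

end DeltaHelpers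
section EvalHelpers2
variable {K L ι : Type} [CommRing K] [Field L]

lemma lpEval_sub (φ : K →+* L) (v : ι → L) (hv : ∀ a, v a ≠ 0) (F G : LaurentPoly K ι) :
    lpEval φ v (F - G) = lpEval φ v F - lpEval φ v G := by
  simp only [lpEval_eq_liftNC φ v hv, map_sub]

lemma lpEval_pow (φ : K →+* L) (v : ι → L) (hv : ∀ a, v a ≠ 0) (F : LaurentPoly K ι) (k : ℕ) :
    lpEval φ v (F ^ k) = lpEval φ v F ^ k := by
  simp only [lpEval_eq_liftNC φ v hv, map_pow]

lemma lpEval_prod (φ : K →+* L) (v : ι → L) (hv : ∀ a, v a ≠ 0) {α : Type*} (s : Finset α)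
    (f : α → LaurentPoly K ι) :
    lpEval φ v (∏ i ∈ s, f i) = ∏ i ∈ s, lpEval φ v (f i) := by
  simp only [lpEval_eq_liftNC φ v hv, map_prod]

end EvalHelpers2

section DeltaEval
variable {I : Type} [Fintype I] [DecidableEq I] {n : I → ℕ}
variable {L : Type} [Field L]

lemma lpEval_deltaL (φ : QQq →+* L) (v : (Σ i : I, Fin (n i)) → L) (hv : ∀ a, v a ≠ 0)
    (l : I → ℤ →₀ ℕ) :
    lpEval φ v (deltaL (n := n) l) =
      ∏ cc : Σ i : I, Fin (n i), (l cc.1).prod fun s k => (1 - φ (qq ^ s) * (v cc)⁻¹) ^ k := by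
  unfold deltaL
  rw [lpEval_prod φ v hv]
  refine Finset.prod_congr rfl fun cc _ => ?_
  rw [Finsupp.prod, Finsupp.prod, lpEval_prod φ v hv]
  refine Finset.prod_congr rfl fun s _ => ?_
  rw [lpEval_pow φ v hv, lpEval_sub φ v hv, lpEval_one φ v hv, lpEval_single]
  rw [Finsupp.prod_single_index (by simp)]
  rw [zpow_neg_one]

/-- The `l`-part of `ψ_i` rewritten via the `ℤ`-indexed data. -/
lemma Lpart_eq (φ : QQq →+* L) (l : I → ℤ →₀ ℕ) (i : I) (w : L) :
    ((gammaOfZ (l i)).prod fun γ k => ((1:L) - φ ((γ : QQq)) / w) ^ (k : ℤ)) =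
      (l i).prod fun s k => (1 - φ (qq ^ s) * w⁻¹) ^ k := by
  unfold gammaOfZ
  rw [Finsupp.prod_mapDomain_index (fun b => by simp)
    (fun b k1 k2 => by rw [zpow_natCast, zpow_natCast, zpow_natCast, pow_add])]
  refine Finsupp.prod_congr fun s _ => ?_
  rw [Units.val_zpow_eq_zpow_val]
  rw [show ((qUnit : QQq)) = qq from rfl]
  rw [zpow_natCast, div_eq_mul_inv]

end DeltaEval
section CondIff
variable {I : Type} [Fintype I] [LinearOrder I] {n : I → ℕ}

lemma ires_aux (N : ℕ) (kc : QQq) (hkc : kc ≠ 0) (P lpF D Ψ Z : IterLaurent QQq N) :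
    (ires QQq N (P * lpF * (constIL QQq N kc * (D * Ψ)) * Z) = 0 ↔
      ires QQq N (P * (D * lpF) * Ψ * Z) = 0) := by
  have h : P * lpF * (constIL QQq N kc * (D * Ψ)) * Z =
      constIL QQq N kc * (P * (D * lpF) * Ψ * Z) := by ring
  rw [h, ires_constIL_mul, mul_eq_zero]
  exact or_iff_right hkc

lemma theta_cond_aux (d : I → I → ℤ) (x : (Σ i : I, Fin (n i)) → QQqˣ)
    (c : I → QQqˣ) (l m : I → ℤ →₀ ℕ) (F : LaurentPoly QQq (Σ i : I, Fin (n i)))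
    (N : ℕ) (e : Fin N ≃ (Σ i : I, Fin (n i))) (dd : Fin N → ℤ) :
    (ires QQq N (
      (∏ a, (constIL QQq N ((x (e a) : QQq)) * (1 + tvar QQq N a)) ^ dd a) *
      lpEval (constIL QQq N)
        (fun cc => constIL QQq N ((x cc : QQq)) * (1 + tvar QQq N (e.symm cc))) F *
      (∏ a, psiOverZVal (constIL QQq N) c (fun i => gammaOfZ (l i)) (fun i => gammaOfZ (m i))
        (e a).1 (constIL QQq N ((x (e a) : QQq)) * (1 + tvar QQq N a))) *
      ∏ p ∈ Finset.filter (fun p : Fin N × Fin N => p.1 < p.2) Finset.univ,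
        (zetaVal d (constIL QQq N qq) (e p.2).1 (e p.1).1
          ((constIL QQq N ((x (e p.2) : QQq)) * (1 + tvar QQq N p.2)) /
           (constIL QQq N ((x (e p.1) : QQq)) * (1 + tvar QQq N p.1))))⁻¹) = 0 ↔
    ires QQq N (
      (∏ a, (constIL QQq N ((x (e a) : QQq)) * (1 + tvar QQq N a)) ^ dd a) *
      lpEval (constIL QQq N)
        (fun cc => constIL QQq N ((x cc : QQq)) * (1 + tvar QQq N (e.symm cc))) (deltaL l * F) *
      (∏ a, psiOverZVal (constIL QQq N) (fun _ => 1) (fun _ => 0) (fun i => gammaOfZ (m i))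
        (e a).1 (constIL QQq N ((x (e a) : QQq)) * (1 + tvar QQq N a))) *
      ∏ p ∈ Finset.filter (fun p : Fin N × Fin N => p.1 < p.2) Finset.univ,
        (zetaVal d (constIL QQq N qq) (e p.2).1 (e p.1).1
          ((constIL QQq N ((x (e p.2) : QQq)) * (1 + tvar QQq N p.2)) /
           (constIL QQq N ((x (e p.1) : QQq)) * (1 + tvar QQq N p.1))))⁻¹) = 0) := by
  set φ := constIL QQq N with hφ
  set v : (Σ i : I, Fin (n i)) → IterLaurent QQq N :=
    fun cc => φ ((x cc : QQq)) * (1 + tvar QQq N (e.symm cc)) with hvdef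
  have hφinj : Function.Injective φ := (constIL QQq N).injective
  have hφne : ∀ y : QQq, y ≠ 0 → φ y ≠ 0 := fun y hy h =>
    hy (hφinj (by rw [h, map_zero]))
  have hv : ∀ cc, v cc ≠ 0 := fun cc =>
    mul_ne_zero (hφne _ (Units.ne_zero _)) (one_add_tvar_ne_zero N _)
  have hkc : (∏ a : Fin N, ((c (e a).1 : QQq))) ≠ 0 :=
    Finset.prod_ne_zero_iff.mpr fun a _ => Units.ne_zero _
  have hmul : lpEval φ v (deltaL l * F) = lpEval φ v (deltaL l) * lpEval φ v F :=
    lpEval_mul φ v hv _ _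
  have hfac : ∀ a : Fin N,
      psiOverZVal φ c (fun i => gammaOfZ (l i)) (fun i => gammaOfZ (m i)) (e a).1
          (φ ((x (e a) : QQq)) * (1 + tvar QQq N a)) =
        φ ((c (e a).1 : QQq)) *
          (((gammaOfZ (l (e a).1)).prod fun γ k =>
              ((1 : IterLaurent QQq N) -
                φ ((γ : QQq)) / (φ ((x (e a) : QQq)) * (1 + tvar QQq N a))) ^ (k : ℤ)) *
            psiOverZVal φ (fun _ => 1) (fun _ => 0) (fun i => gammaOfZ (m i)) (e a).1
              (φ ((x (e a) : QQq)) * (1 + tvar QQq N a))) := by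
    intro a
    unfold psiOverZVal
    simp only [Units.val_one, map_one, one_mul, Finsupp.prod_zero_index]
    ring
  have hpsi : (∏ a : Fin N,
      psiOverZVal φ c (fun i => gammaOfZ (l i)) (fun i => gammaOfZ (m i)) (e a).1
        (φ ((x (e a) : QQq)) * (1 + tvar QQq N a))) =
      φ (∏ a : Fin N, ((c (e a).1 : QQq))) *
        (lpEval φ v (deltaL l) *
          ∏ a : Fin N,
            psiOverZVal φ (fun _ => 1) (fun _ => 0) (fun i => gammaOfZ (m i)) (e a).1
              (φ ((x (e a) : QQq)) * (1 + tvar QQq N a))) := by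
    rw [Finset.prod_congr rfl fun a _ => hfac a, Finset.prod_mul_distrib,
      Finset.prod_mul_distrib, map_prod]
    congr 1
    congr 1
    rw [lpEval_deltaL φ v hv l,
      ← Equiv.prod_comp e (fun cc : Σ i : I, Fin (n i) =>
        (l cc.1).prod fun s k => ((1 : IterLaurent QQq N) - φ (qq ^ s) * (v cc)⁻¹) ^ k)]
    refine Finset.prod_congr rfl fun a _ => ?_
    rw [Lpart_eq φ l (e a).1 (φ ((x (e a) : QQq)) * (1 + tvar QQq N a))]
    have hva : v (e a) = φ ((x (e a) : QQq)) * (1 + tvar QQq N a) := by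
      rw [hvdef]; simp
    rw [hva]
  rw [hmul, hpsi]
  exact ires_aux N _ hkc _ _ _ _ _

lemma theta_cond_iff (d : I → I → ℤ) (x : (Σ i : I, Fin (n i)) → QQqˣ)
    (c : I → QQqˣ) (l m : I → ℤ →₀ ℕ) (F : LaurentPoly QQq (Σ i : I, Fin (n i))) :
    (ThetaPsiCond d x (psiOverZVal (constIL QQq (∑ i, n i)) c (fun i => gammaOfZ (l i))
        (fun i => gammaOfZ (m i))) F ↔
      ThetaPsiCond d x (psiOverZVal (constIL QQq (∑ i, n i)) (fun _ => 1) (fun _ => 0)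
        (fun i => gammaOfZ (m i))) (deltaL l * F)) := by
  unfold ThetaPsiCond
  exact forall_congr' fun e => forall_congr' fun dd =>
    theta_cond_aux d x c l m F (∑ i, n i) e dd

end CondIff
section ThetaSubSec
variable {I : Type} [Fintype I] [LinearOrder I] {n : I → ℕ}

lemma ires_smul_aux (N : ℕ) (k : QQq) (P X Ψ Z : IterLaurent QQq N) :
    ires QQq N (P * (constIL QQq N k * X) * Ψ * Z) = k * ires QQq N (P * X * Ψ * Z) := by
  rw [show P * (constIL QQq N k * X) * Ψ * Z = constIL QQq N k * (P * X * Ψ * Z) from by ring,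
    ires_constIL_mul]

/-- `Θ(ψ)_𝐱` as a submodule. -/
noncomputable def ThetaSub (d : I → I → ℤ) (x : (Σ i : I, Fin (n i)) → QQqˣ)
    (psiv : I → IterLaurent QQq (∑ i, n i) → IterLaurent QQq (∑ i, n i)) :
    Submodule QQq (LaurentPoly QQq (Σ i : I, Fin (n i))) where
  carrier := {F | F ∈ VSymF n QQq ∧ ThetaPsiCond d x psiv F}
  zero_mem' := by
    refine ⟨Submodule.zero_mem _, fun e dd => ?_⟩
    rw [lpEval_zero, mul_zero, zero_mul, zero_mul]
    exact ires_zero _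
  add_mem' := by
    rintro F G ⟨hFs, hFc⟩ ⟨hGs, hGc⟩
    refine ⟨Submodule.add_mem _ hFs hGs, fun e dd => ?_⟩
    have hv : ∀ cc : Σ i : I, Fin (n i),
        constIL QQq (∑ i, n i) ((x cc : QQq)) * (1 + tvar QQq (∑ i, n i) (e.symm cc)) ≠ 0 :=
      fun cc => mul_ne_zero
        (fun h => Units.ne_zero (x cc) ((constIL QQq (∑ i, n i)).injective (by rw [h, map_zero])))
        (one_add_tvar_ne_zero _ _)
    rw [lpEval_add _ _ hv, mul_add, add_mul, add_mul, ires_add, hFc e dd, hGc e dd, add_zero]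
  smul_mem' := by
    rintro k F ⟨hFs, hFc⟩
    refine ⟨Submodule.smul_mem _ k hFs, fun e dd => ?_⟩
    have hv : ∀ cc : Σ i : I, Fin (n i),
        constIL QQq (∑ i, n i) ((x cc : QQq)) * (1 + tvar QQq (∑ i, n i) (e.symm cc)) ≠ 0 :=
      fun cc => mul_ne_zero
        (fun h => Units.ne_zero (x cc) ((constIL QQq (∑ i, n i)).injective (by rw [h, map_zero])))
        (one_add_tvar_ne_zero _ _)
    rw [lpEval_smul _ _ hv, ires_smul_aux, hFc e dd, mul_zero]

lemma mem_VSymF_deltaL_mul_iff (l : I → ℤ →₀ ℕ) (F : LaurentPoly QQq (Σ i : I, Fin (n i))) :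
    (F ∈ VSymF n QQq ↔ deltaL l * F ∈ VSymF n QQq) := by
  constructor
  · intro hF σ hσ
    rw [map_mul, lpRename_deltaL l σ hσ, hF σ hσ]
  · intro hF σ hσ
    have h := hF σ hσ
    rw [map_mul, lpRename_deltaL l σ hσ] at h
    exact mul_left_cancel₀ (deltaL_ne_zero l) h

end ThetaSubSec

/-- Suppose `ψ` has all zeroes and poles in `q^ℤ` and all entries of `𝐱`
are integer powers of `q`. Then multiplication by `Δ_𝐥` induces a `𝕂`-linear isomorphism
`S_𝐧/(S_𝐧 ∩ Θ(ψ)_𝐱) ≅ (Δ_𝐥·S_𝐧)/((Δ_𝐥·S_𝐧) ∩ Θ(1/ψ^den)_𝐱)`. -/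
theorem statement10 {I : Type} [Fintype I] [LinearOrder I]
    (d : I → I → ℤ)
    (hdsym : ∀ i j, d i j = d j i) (hdpos : ∀ i, 0 < d i i) (hdeven : ∀ i, Even (d i i))
    (hdneg : ∀ i j, i ≠ j → d i j ≤ 0) (hdint : ∀ i j, d i i ∣ 2 * d i j)
    (n : I → ℕ)
    (c : I → QQqˣ) (l m : I → ℤ →₀ ℕ)
    (x : (Σ i : I, Fin (n i)) → QQqˣ)
    (hx : ∀ cc : Σ i : I, Fin (n i), ∃ s : ℤ, (x cc : QQq) = qq ^ s) :
    ∃ Θ1 Θ2 : Submodule QQq (LaurentPoly QQq (Σ i : I, Fin (n i))),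
      (Θ1 : Set (LaurentPoly QQq (Σ i : I, Fin (n i)))) =
        {F | F ∈ VSymF n QQq ∧ ThetaPsiCond d x
          (psiOverZVal (constIL QQq (∑ i, n i)) c (fun i => gammaOfZ (l i))
            (fun i => gammaOfZ (m i))) F} ∧
      (Θ2 : Set (LaurentPoly QQq (Σ i : I, Fin (n i)))) =
        {F | F ∈ VSymF n QQq ∧ ThetaPsiCond d x
          (psiOverZVal (constIL QQq (∑ i, n i)) (fun _ => 1) (fun _ => 0)
            (fun i => gammaOfZ (m i))) F} ∧
      ∃ iso : (shuffleSpan d n ⧸ Θ1.comap (shuffleSpan d n).subtype) ≃ₗ[QQq]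
          ((Submodule.map (LinearMap.mulLeft QQq (deltaL l)) (shuffleSpan d n)) ⧸
            Θ2.comap
              (Submodule.map (LinearMap.mulLeft QQq (deltaL l)) (shuffleSpan d n)).subtype),
        ∀ F : shuffleSpan d n,
          iso (Submodule.Quotient.mk F) =
            Submodule.Quotient.mk ⟨deltaL l * (F : LaurentPoly QQq (Σ i : I, Fin (n i))),
              Submodule.mem_map_of_mem F.2⟩ := by
  classical
  set N := ∑ i, n i with hN
  refine ⟨ThetaSub d x (psiOverZVal (constIL QQq (∑ i, n i)) c (fun i => gammaOfZ (l i))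
      (fun i => gammaOfZ (m i))),
    ThetaSub d x (psiOverZVal (constIL QQq (∑ i, n i)) (fun _ => 1) (fun _ => 0)
      (fun i => gammaOfZ (m i))), rfl, rfl, ?_⟩
  set S := shuffleSpan d n with hS
  set Δ := deltaL (n := n) l with hΔ
  set mulmap := LinearMap.mulLeft QQq Δ with hmulmap
  set S2 := Submodule.map mulmap S with hS2
  set Θ1 := ThetaSub d x (psiOverZVal (constIL QQq (∑ i, n i)) c (fun i => gammaOfZ (l i))
      (fun i => gammaOfZ (m i))) with hΘ1
  set Θ2 := ThetaSub d x (psiOverZVal (constIL QQq (∑ i, n i)) (fun _ => 1) (fun _ => 0)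
      (fun i => gammaOfZ (m i))) with hΘ2
  have key : ∀ F : LaurentPoly QQq (Σ i : I, Fin (n i)), F ∈ Θ1 ↔ Δ * F ∈ Θ2 := by
    intro F
    exact and_congr (mem_VSymF_deltaL_mul_iff l F) (theta_cond_iff d x c l m F)
  let g : S →ₗ[QQq] S2 := mulmap.restrict (fun F hF => Submodule.mem_map_of_mem hF)
  let f : S →ₗ[QQq] (S2 ⧸ Θ2.comap S2.subtype) := (Θ2.comap S2.subtype).mkQ.comp g
  have hgval : ∀ F : S, ((g F : S2) : LaurentPoly QQq (Σ i : I, Fin (n i))) = Δ * (F : _) := by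
    intro F; rfl
  have hfmem : ∀ F : S, (f F = 0 ↔ Δ * (F : LaurentPoly QQq (Σ i : I, Fin (n i))) ∈ Θ2) := by
    intro F
    show Submodule.Quotient.mk (g F) = 0 ↔ _
    rw [Submodule.Quotient.mk_eq_zero, Submodule.mem_comap]
    exact Iff.rfl
  have hle : Θ1.comap S.subtype ≤ LinearMap.ker f := by
    intro F hF
    rw [LinearMap.mem_ker, hfmem F]
    exact (key _).mp hF
  have hker : LinearMap.ker f ≤ Θ1.comap S.subtype := by
    intro F hF
    rw [LinearMap.mem_ker, hfmem F] at hF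
    exact Submodule.mem_comap.mpr ((key _).mpr hF)
  let lift := (Θ1.comap S.subtype).liftQ f hle
  have hinj : Function.Injective lift :=
    LinearMap.ker_eq_bot.mp (Submodule.ker_liftQ_eq_bot _ _ _ hker)
  have hsurj : Function.Surjective lift := by
    intro y
    obtain ⟨z, rfl⟩ := Submodule.Quotient.mk_surjective _ y
    obtain ⟨F, hFS, hFz⟩ := Submodule.mem_map.mp z.2
    refine ⟨Submodule.Quotient.mk ⟨F, hFS⟩, ?_⟩
    rw [Submodule.liftQ_apply]
    show Submodule.Quotient.mk (g ⟨F, hFS⟩) = Submodule.Quotient.mk z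
    congr 1
    exact Subtype.ext (by rw [hgval]; exact hFz)
  refine ⟨LinearEquiv.ofBijective lift ⟨hinj, hsurj⟩, fun F => ?_⟩
  show lift (Submodule.Quotient.mk F) = _
  rw [Submodule.liftQ_apply]
  show Submodule.Quotient.mk (g F) = _
  congr 1
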